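/- Let n ≥ 3 be an integer and let μ be a real number with 4/n ≤ μ < 4/(n−1), and set s = (μn − 4)/(2μ). Then there exist positive real numbers q, r, q̃, r̃ such that: (i) 0 < 1/q < 1/2, 0 < 1/r < 1/2, 0 < 1/q̃ < 1/2, 0 < 1/r̃ < 1/2; (ii) 1/q + 1/q̃ < 1 and (n−2)/n < r/r̃ < n/(n−2); (iii) 1/q + n/r < n/2 and 1/q̃ + n/r̃ < n/2; (iv) 2/q + n/r = n/2 − s and 2/q + n/r + 2/q̃ + n/r̃ = n; (v) 1 − 1/q̃ = (μ+1)/q and 1 − 1/r̃ = (μ+1)/r; (vi) μ/q + μn/(2r) = 1 and μ/r < 1. -/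

import Mathlib

set_option maxHeartbeats 2000000 in
theorem strichartz_exponents_high_dim (n : ℕ) (hn : 3 ≤ n) (μ : ℝ)
    (hμ1 : 4 / (n : ℝ) ≤ μ) (hμ2 : μ < 4 / ((n : ℝ) - 1))
    (s : ℝ) (hs : s = (μ * n - 4) / (2 * μ)) :
    ∃ q r qt rt : ℝ,
      (0 < 1/q ∧ 1/q < 1/2) ∧ (0 < 1/r ∧ 1/r < 1/2) ∧
      (0 < 1/qt ∧ 1/qt < 1/2) ∧ (0 < 1/rt ∧ 1/rt < 1/2) ∧
      1/q + 1/qt < 1 ∧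
      ((n : ℝ) - 2) / n < r / rt ∧ r / rt < (n : ℝ) / ((n : ℝ) - 2) ∧
      1/q + n/r < (n : ℝ)/2 ∧ 1/qt + n/rt < (n : ℝ)/2 ∧
      2/q + n/r = (n : ℝ)/2 - s ∧
      2/q + n/r + 2/qt + n/rt = (n : ℝ) ∧
      1 - 1/qt = (μ + 1)/q ∧ 1 - 1/rt = (μ + 1)/r ∧
      μ/q + μ * n / (2 * r) = 1 ∧ μ/r < 1 := by
  set N : ℝ := (n : ℝ) with hNdef
  have hN : (3:ℝ) ≤ N := by rw [hNdef]; exact_mod_cast hn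
  have hN0 : (0:ℝ) < N := by linarith
  have hμ0 : 0 < μ := lt_of_lt_of_le (by positivity) hμ1
  have h4 : 4 ≤ N * μ := by rw [div_le_iff₀ hN0] at hμ1; linarith
  have h5 : μ * (N - 1) < 4 := by
    have hN1 : (0:ℝ) < N - 1 := by linarith
    rw [lt_div_iff₀ hN1] at hμ2; linarith
  have hμ2' : μ < 2 := by nlinarith
  have hμ1p : (0:ℝ) < μ + 1 := by linarith
  have hD : (0:ℝ) < N * μ * (μ + 1) := by positivity
  have hE : (0:ℝ) < (N - 2) * (μ + 1) + N := by nlinarith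
  -- three lower bounds are each strictly below the upper bound
  have h2U : ((2 - μ) * (μ + 1)) / (N * μ * (μ + 1)) < (μ + 2) / (N * μ * (μ + 1)) := by
    rw [div_lt_div_iff₀ hD hD]; nlinarith [mul_pos hμ0 hμ0, hD]
  have h5U : (N - 2) / ((N - 2) * (μ + 1) + N) < (μ + 2) / (N * μ * (μ + 1)) := by
    rw [div_lt_div_iff₀ hE hD]
    nlinarith [mul_nonneg (mul_nonneg (mul_nonneg hμ0.le (by linarith : (0:ℝ) ≤ N - 2))
        (by linarith : (0:ℝ) ≤ N - 1)) (by linarith : (0:ℝ) ≤ 4 - μ * (N - 1)),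
      mul_pos (by nlinarith : (0:ℝ) < N^2 - 2*N - 2) (by linarith : (0:ℝ) < 4 - μ * (N - 1)),
      (by linarith : (0:ℝ) ≤ N - 1)]
  have h6U : (N * μ - 2) / (N * μ * (μ + 1)) < (μ + 2) / (N * μ * (μ + 1)) := by
    rw [div_lt_div_iff₀ hD hD]; nlinarith
  -- choose y strictly between all lower bounds and the upper bound
  obtain ⟨y, hy2, hy5, hy6, hyU⟩ :
      ∃ y : ℝ, ((2 - μ) * (μ + 1)) / (N * μ * (μ + 1)) < y ∧
        (N - 2) / ((N - 2) * (μ + 1) + N) < y ∧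
        (N * μ - 2) / (N * μ * (μ + 1)) < y ∧ y < (μ + 2) / (N * μ * (μ + 1)) := by
    refine ⟨(max (max (((2 - μ) * (μ + 1)) / (N * μ * (μ + 1)))
        ((N - 2) / ((N - 2) * (μ + 1) + N))) ((N * μ - 2) / (N * μ * (μ + 1)))
        + (μ + 2) / (N * μ * (μ + 1))) / 2, ?_, ?_, ?_, ?_⟩ <;>
      · have hM := max_lt (max_lt h2U h5U) h6U
        have l1 := le_max_left (((2 - μ) * (μ + 1)) / (N * μ * (μ + 1)))
          ((N - 2) / ((N - 2) * (μ + 1) + N))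
        have l2 := le_max_right (((2 - μ) * (μ + 1)) / (N * μ * (μ + 1)))
          ((N - 2) / ((N - 2) * (μ + 1) + N))
        have l3 := le_max_left (max (((2 - μ) * (μ + 1)) / (N * μ * (μ + 1)))
          ((N - 2) / ((N - 2) * (μ + 1) + N))) ((N * μ - 2) / (N * μ * (μ + 1)))
        have l4 := le_max_right (max (((2 - μ) * (μ + 1)) / (N * μ * (μ + 1)))
          ((N - 2) / ((N - 2) * (μ + 1) + N))) ((N * μ - 2) / (N * μ * (μ + 1)))
        linarith
  -- cleared-denominator forms
  have hP2 : (2 - μ) * (μ + 1) < y * (N * μ * (μ + 1)) := (div_lt_iff₀ hD).mp hy2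
  have hP5 : N - 2 < y * ((N - 2) * (μ + 1) + N) := (div_lt_iff₀ hE).mp hy5
  have hP6 : N * μ - 2 < y * (N * μ * (μ + 1)) := (div_lt_iff₀ hD).mp hy6
  have hP4 : y * (N * μ * (μ + 1)) < μ + 2 := (lt_div_iff₀ hD).mp hyU
  have hy0 : 0 < y := by
    have hyD : 0 < y * (N * μ * (μ + 1)) := by linarith
    rcases mul_pos_iff.mp hyD with ⟨h, _⟩ | ⟨_, h⟩
    · exact h
    · linarith
  clear hy2 hy5 hy6 h2U h5U h6U hμ1 hμ2
  have hNμy : N * μ * y < 2 := by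
    refine lt_of_mul_lt_mul_left (a := μ + 1) ?_ hμ1p.le
    nlinarith [hP4, hμ0]
  have hNμy2 : 2 - μ < N * μ * y := by
    refine lt_of_mul_lt_mul_left (a := μ + 1) ?_ hμ1p.le
    nlinarith [hP2]
  have hNμy3 : N * μ * y < N * μ - 2 := by
    refine lt_of_mul_lt_mul_left (a := μ + 1) ?_ hμ1p.le
    nlinarith [hP4, mul_nonneg (by linarith : (0:ℝ) ≤ N * μ - 4) hμ0.le, h4, hμ0]
  obtain ⟨x, hxμ⟩ : ∃ x : ℝ, 2 * μ * x = 2 - N * μ * y :=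
    ⟨(2 - N * μ * y) / (2 * μ), by field_simp⟩
  have hxμ1 : 2 * μ * x * (μ + 1) = (2 - N * μ * y) * (μ + 1) := by
    linear_combination (μ + 1) * hxμ
  have h2μ : (0:ℝ) < 2 * μ := by linarith
  have hx0 : 0 < x := by
    refine lt_of_mul_lt_mul_left (a := 2 * μ) ?_ h2μ.le
    nlinarith [hxμ, hNμy]
  have hxhalf : x < 1/2 := by
    refine lt_of_mul_lt_mul_left (a := 2 * μ) ?_ h2μ.le
    nlinarith [hxμ, hNμy2]
  have hxlow' : 1 < x * (2 * (μ + 1)) := by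
    refine lt_of_mul_lt_mul_left (a := μ) ?_ hμ0.le
    nlinarith [hxμ1, hP4]
  have hxhigh' : x * (μ + 1) < 1 := by
    refine lt_of_mul_lt_mul_left (a := 2 * μ) ?_ h2μ.le
    nlinarith [hxμ1, hP6, h4]
  have hyhalf : y < 1/2 := by
    refine lt_of_mul_lt_mul_left (a := N * μ * (μ + 1)) ?_ hD.le
    nlinarith [hP4, mul_nonneg (by linarith : (0:ℝ) ≤ N * μ - 4) hμ1p.le]
  have hylow' : 1 < y * (2 * (μ + 1)) := by
    refine lt_of_mul_lt_mul_left (a := N * μ / 2) ?_ (by positivity)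
    nlinarith [hP6, h4]
  have hyhigh' : y * (μ + 1) < 1 := by
    refine lt_of_mul_lt_mul_left (a := N * μ) ?_ (by positivity)
    nlinarith [hP4, h4, hμ2']
  have hw0 : 0 < 1 - (μ + 1) * x := by nlinarith [hxhigh']
  have hwhalf : 1 - (μ + 1) * x < 1/2 := by nlinarith [hxlow']
  have hz0 : 0 < 1 - (μ + 1) * y := by nlinarith [hyhigh']
  have hzhalf : 1 - (μ + 1) * y < 1/2 := by nlinarith [hylow']
  have hsum : μ * (2 * x + N * y) = 2 := by linear_combination hxμ
  -- the d-bound for the ratio condition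
  have hyd : y * (N * (μ + 1) + N - 2) < N := by
    have hF : (0:ℝ) < N * (μ + 1) + N - 2 := by nlinarith
    have hUd : (μ + 2) / (N * μ * (μ + 1)) ≤ N / (N * (μ + 1) + N - 2) := by
      rw [div_le_div_iff₀ hD hF]
      nlinarith [mul_nonneg (by linarith : (0:ℝ) ≤ N * μ - 4)
          (mul_nonneg hμ0.le (by linarith : (0:ℝ) ≤ N - 1)),
        mul_nonneg (by linarith : (0:ℝ) ≤ N * μ - 4) hN0.le]
    have h := lt_of_lt_of_le hyU hUd
    rw [lt_div_iff₀ hF] at h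
    exact h
  clear hyU hNμy hNμy2 hxlow' hxhigh' hylow' hyhigh' hP2 hE hμ2' h5 hNdef hn
  refine ⟨x⁻¹, y⁻¹, (1 - (μ + 1) * x)⁻¹, (1 - (μ + 1) * y)⁻¹, ?_⟩
  simp only [one_div, inv_inv, div_inv_eq_mul, one_mul]
  refine ⟨⟨hx0, ?_⟩, ⟨hy0, ?_⟩, ⟨hw0, ?_⟩, ⟨hz0, ?_⟩, ?_, ?_, ?_, ?_, ?_, ?_, ?_, ?_, ?_, ?_, ?_⟩
  · linarith [hxhalf]
  · linarith [hyhalf]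
  · linarith [hwhalf]
  · linarith [hzhalf]
  · nlinarith [mul_pos hμ0 hx0]
  · -- (N-2)/N < y⁻¹ * (1-(μ+1)y)
    rw [inv_mul_eq_div, div_lt_div_iff₀ hN0 hy0]; nlinarith [hyd]
  · rw [inv_mul_eq_div, div_lt_div_iff₀ hy0 (by linarith : (0:ℝ) < N - 2)]
    nlinarith [hP5]
  · -- x + N*y < N/2
    refine lt_of_mul_lt_mul_left (a := 2 * μ) ?_ h2μ.le
    nlinarith [hxμ, hNμy3]
  · -- (1-(μ+1)x) + N*(1-(μ+1)y) < N/2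
    refine lt_of_mul_lt_mul_left (a := 2 * μ) ?_ h2μ.le
    nlinarith [hxμ1, hP6]
  · -- 2x + Ny = N/2 - s
    rw [hs]; field_simp; linear_combination (2 : ℝ) * hsum
  · linear_combination -hsum
  · ring
  · ring
  · field_simp; linear_combination hsum
  · refine lt_of_mul_lt_mul_left (a := N * (μ + 1)) ?_ (by positivity)
    nlinarith [hP4, mul_nonneg (by linarith : (0:ℝ) ≤ N - 3) hμ1p.le]
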